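/- For a nondegenerate model of walk, the kernel curve Ē_t has at most one singular point. -/

import Mathlib

open MvPolynomial

noncomputable section

variable (d : ℤ → ℤ → ℝ) (t : ℝ)

/-- The kernel polynomial `K(x,y,t) = xy(1 - t·Σ_{(i,j)∈{-1,0,1}²} d_{i,j} x^i y^j)`
as an element of `ℂ[x,y] = MvPolynomial (Fin 2) ℂ` (variable `0` is `x`, variable `1` is `y`). -/
def kernelK : MvPolynomial (Fin 2) ℂ :=
  X 0 * X 1 - C ((t : ℝ) : ℂ) *
    ∑ i ∈ Finset.range 3, ∑ j ∈ Finset.range 3,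
      C ((d ((i : ℤ) - 1) ((j : ℤ) - 1) : ℝ) : ℂ) * X 0 ^ i * X 1 ^ j

/-- The standing hypotheses: the weights `d_{i,j}` for `(i,j) ∈ {-1,0,1}²` lie in `[0,1]`
and sum to `1`, `t ∈ (0,1)`, and `t` is transcendental over `ℚ(d_{i,j})`, i.e. no nonzero
polynomial with coefficients in the subfield of `ℝ` generated by the `d_{i,j}` vanishes at `t`. -/
def WalkHyp : Prop :=
  (∀ i ∈ ({-1, 0, 1} : Set ℤ), ∀ j ∈ ({-1, 0, 1} : Set ℤ), 0 ≤ d i j ∧ d i j ≤ 1) ∧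
  (∑ i ∈ ({-1, 0, 1} : Finset ℤ), ∑ j ∈ ({-1, 0, 1} : Finset ℤ), d i j = 1) ∧
  (0 < t ∧ t < 1) ∧
  (∀ p : Polynomial ℝ,
      (∀ n, p.coeff n ∈
        Subfield.closure
          {x : ℝ | ∃ i ∈ ({-1, 0, 1} : Set ℤ), ∃ j ∈ ({-1, 0, 1} : Set ℤ), x = d i j}) →
      Polynomial.eval t p = 0 → p = 0)

/-- The model is degenerate if `K` is reducible in `ℂ[x,y]`, or has degree `≤ 1` in `x`,
or degree `≤ 1` in `y`. -/
def Degenerate : Prop :=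
  ¬ Irreducible (kernelK d t) ∨
    degreeOf 0 (kernelK d t) ≤ 1 ∨ degreeOf 1 (kernelK d t) ≤ 1

/-- The bihomogenized kernel
`K̄(x₀,x₁,y₀,y₁) = x₀x₁y₀y₁ - t Σ_{i,j=0}^{2} d_{i-1,j-1} x₀^i x₁^{2-i} y₀^j y₁^{2-j}`,
with variables `0 ↦ x₀`, `1 ↦ x₁`, `2 ↦ y₀`, `3 ↦ y₁`. -/
def kernelKbar : MvPolynomial (Fin 4) ℂ :=
  X 0 * X 1 * X 2 * X 3 - C ((t : ℝ) : ℂ) *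
    ∑ i ∈ Finset.range 3, ∑ j ∈ Finset.range 3,
      C ((d ((i : ℤ) - 1) ((j : ℤ) - 1) : ℝ) : ℂ) *
        X 0 ^ i * X 1 ^ (2 - i) * X 2 ^ j * X 3 ^ (2 - j)

/-- `([a:b],[c:e])` lies on the kernel curve `Ē_t ⊆ ℙ¹(ℂ)×ℙ¹(ℂ)`. -/
def OnKernelCurve (a b c e : ℂ) : Prop :=
  eval ![a, b, c, e] (kernelKbar d t) = 0

/-- `([a:b],[c:e])` is a singular point of the kernel curve `Ē_t`: it lies on `Ē_t`
and all four partial derivatives of `K̄` vanish there. -/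
def SingularAt (a b c e : ℂ) : Prop :=
  OnKernelCurve d t a b c e ∧
    ∀ k : Fin 4, eval ![a, b, c, e] (pderiv k (kernelKbar d t)) = 0

/-- `Ā₁(x₀,x₁)`: the coefficient of `y₀²` in `K̄`. -/
def Abar1 : MvPolynomial (Fin 2) ℂ :=
  -(C ((t : ℝ) : ℂ)) *
    (C ((d (-1) 1 : ℝ) : ℂ) * X 1 ^ 2 + C ((d 0 1 : ℝ) : ℂ) * X 0 * X 1 +
      C ((d 1 1 : ℝ) : ℂ) * X 0 ^ 2)

/-- `B̄₁(x₀,x₁)`: the coefficient of `y₀y₁` in `K̄`. -/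
def Bbar1 : MvPolynomial (Fin 2) ℂ :=
  X 0 * X 1 - C ((t : ℝ) : ℂ) *
    (C ((d (-1) 0 : ℝ) : ℂ) * X 1 ^ 2 + C ((d 0 0 : ℝ) : ℂ) * X 0 * X 1 +
      C ((d 1 0 : ℝ) : ℂ) * X 0 ^ 2)

/-- `C̄₁(x₀,x₁)`: the coefficient of `y₁²` in `K̄`. -/
def Cbar1 : MvPolynomial (Fin 2) ℂ :=
  -(C ((t : ℝ) : ℂ)) *
    (C ((d (-1) (-1) : ℝ) : ℂ) * X 1 ^ 2 + C ((d 0 (-1) : ℝ) : ℂ) * X 0 * X 1 +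
      C ((d 1 (-1) : ℝ) : ℂ) * X 0 ^ 2)

/-- The discriminant `Δ₁(x₀,x₁) = B̄₁² - 4Ā₁C̄₁`, homogeneous of degree 4. -/
def Delta1 : MvPolynomial (Fin 2) ℂ :=
  Bbar1 d t ^ 2 - 4 * Abar1 d t * Cbar1 d t

/-- `Ā₂(y₀,y₁)`: the coefficient of `x₀²` in `K̄`. -/
def Abar2 : MvPolynomial (Fin 2) ℂ :=
  -(C ((t : ℝ) : ℂ)) *
    (C ((d 1 (-1) : ℝ) : ℂ) * X 1 ^ 2 + C ((d 1 0 : ℝ) : ℂ) * X 0 * X 1 +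
      C ((d 1 1 : ℝ) : ℂ) * X 0 ^ 2)

/-- `B̄₂(y₀,y₁)`: the coefficient of `x₀x₁` in `K̄`. -/
def Bbar2 : MvPolynomial (Fin 2) ℂ :=
  X 0 * X 1 - C ((t : ℝ) : ℂ) *
    (C ((d 0 (-1) : ℝ) : ℂ) * X 1 ^ 2 + C ((d 0 0 : ℝ) : ℂ) * X 0 * X 1 +
      C ((d 0 1 : ℝ) : ℂ) * X 0 ^ 2)

/-- `C̄₂(y₀,y₁)`: the coefficient of `x₁²` in `K̄`. -/
def Cbar2 : MvPolynomial (Fin 2) ℂ :=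
  -(C ((t : ℝ) : ℂ)) *
    (C ((d (-1) (-1) : ℝ) : ℂ) * X 1 ^ 2 + C ((d (-1) 0 : ℝ) : ℂ) * X 0 * X 1 +
      C ((d (-1) 1 : ℝ) : ℂ) * X 0 ^ 2)

/-- The discriminant `Δ₂(y₀,y₁) = B̄₂² - 4Ā₂C̄₂`, homogeneous of degree 4. -/
def Delta2 : MvPolynomial (Fin 2) ℂ :=
  Bbar2 d t ^ 2 - 4 * Abar2 d t * Cbar2 d t

/-- `[a:b] ∈ ℙ¹(ℂ)` is a double root of the homogeneous polynomial `p`: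
`(bX - aY)²` divides `p(X,Y)`. -/
def IsDoubleRootAt (a b : ℂ) (p : MvPolynomial (Fin 2) ℂ) : Prop :=
  (C b * X 0 - C a * X 1) ^ 2 ∣ p

/-- The step set of the model is included in a closed half plane whose boundary passes
through the origin. -/
def StepSetInHalfPlane : Prop :=
  ∃ u v : ℝ, (u, v) ≠ (0, 0) ∧
    ∀ i ∈ ({-1, 0, 1} : Set ℤ), ∀ j ∈ ({-1, 0, 1} : Set ℤ),
      (i, j) ≠ (0, 0) → d i j ≠ 0 → 0 ≤ u * (i : ℝ) + v * (j : ℝ)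

/-- `α₂ = β₂` for the first family of (G0). -/
def alpha2 : ℝ := 1 - 2*t*(d 0 0) + t^2*(d 0 0)^2 - 4*t^2*(d (-1) 1)*(d 1 (-1))

/-- `α₃` for the first family of (G0). -/
def alpha3 : ℝ := 2*t^2*(d 1 0)*(d 0 0) - 2*t*(d 1 0) - 4*t^2*(d 0 1)*(d 1 (-1))

/-- `α₄` for the first family of (G0). -/
def alpha4 : ℝ := t^2*((d 1 0)^2 - 4*(d 1 1)*(d 1 (-1)))

/-- `β₃` for the first family of (G0). -/
def beta3 : ℝ := 2*t^2*(d 0 1)*(d 0 0) - 2*t*(d 0 1) - 4*t^2*(d 1 0)*(d (-1) 1)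

/-- `β₄` for the first family of (G0). -/
def beta4 : ℝ := t^2*((d 0 1)^2 - 4*(d 1 1)*(d (-1) 1))

/-- The kernel polynomial as a function `ℂ × ℂ → ℂ`:
`K(x,y,t) = xy - t Σ_{i,j=0}^{2} d_{i-1,j-1} x^i y^j`. -/
def kernelKfun (x y : ℂ) : ℂ :=
  x * y - ((t : ℝ) : ℂ) *
    ∑ i ∈ Finset.range 3, ∑ j ∈ Finset.range 3,
      ((d ((i : ℤ) - 1) ((j : ℤ) - 1) : ℝ) : ℂ) * x ^ i * y ^ j

-- ===================== auxiliary machinery =====================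

private def phi2 : Polynomial ℂ →ₐ[ℂ] MvPolynomial (Fin 2) ℂ :=
  Polynomial.aeval (X 1)

private def theta1 : Polynomial ℂ →ₐ[ℂ] MvPolynomial (Fin 1) ℂ :=
  Polynomial.aeval (X 0)

private lemma theta1_injective : Function.Injective theta1 := by
  have h : (MvPolynomial.aeval (fun _ : Fin 1 => (Polynomial.X : Polynomial ℂ))).comp theta1
      = AlgHom.id ℂ (Polynomial ℂ) := by
    apply Polynomial.algHom_ext
    simp [theta1]
  have hx : ∀ z : Polynomial ℂ,
      (MvPolynomial.aeval (fun _ : Fin 1 => (Polynomial.X : Polynomial ℂ))) (theta1 z) = z := by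
    intro z
    simpa using congrArg (fun (f : Polynomial ℂ →ₐ[ℂ] Polynomial ℂ) => f z) h
  intro x y hxy
  rw [← hx x, ← hx y, hxy]

private lemma finSuccEquiv_phi2 (f : Polynomial ℂ) :
    (finSuccEquiv ℂ 1) (phi2 f) = Polynomial.C (theta1 f) := by
  have h : (finSuccEquiv ℂ 1).toAlgHom.comp phi2
      = (Polynomial.CAlgHom).comp theta1 := by
    apply Polynomial.algHom_ext
    simp only [AlgHom.comp_apply, phi2, theta1, Polynomial.aeval_X,
      AlgEquiv.toAlgHom_eq_coe, AlgHom.coe_coe]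
    rw [show (X 1 : MvPolynomial (Fin 2) ℂ) = X (Fin.succ 0) from rfl]
    erw [finSuccEquiv_X_succ]
    rfl
  exact congrArg (fun (g : Polynomial ℂ →ₐ[ℂ] Polynomial (MvPolynomial (Fin 1) ℂ)) => g f) h

private lemma core (p q r s : Polynomial ℂ)
    (P : MvPolynomial (Fin 2) ℂ)
    (hP : P = phi2 p * X 0 ^ 2 + phi2 q * X 0 + phi2 r)
    (hirr : Irreducible P) (hdeg : 2 ≤ degreeOf 0 P)
    (hsq : q ^ 2 - 4 * (p * r) = s ^ 2) : False := by
  have hnatP : ((finSuccEquiv ℂ 1) P).natDegree = degreeOf 0 P := natDegree_finSuccEquiv P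
  have hψP : (finSuccEquiv ℂ 1) P = Polynomial.C (theta1 p) * Polynomial.X ^ 2
      + Polynomial.C (theta1 q) * Polynomial.X + Polynomial.C (theta1 r) := by
    rw [hP]
    simp [map_add, map_mul, map_pow, finSuccEquiv_phi2, finSuccEquiv_X_zero]
  have hp0 : p ≠ 0 := by
    intro h
    rw [h] at hψP
    simp only [map_zero, Polynomial.C_0, zero_mul, zero_add] at hψP
    have : ((finSuccEquiv ℂ 1) P).natDegree ≤ 1 := by
      rw [hψP]; compute_degree
    omega
  have hθp : theta1 p ≠ 0 := fun h => hp0 (theta1_injective (by simpa using h))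
  have hφsq : phi2 q ^ 2 - 4 * (phi2 p * phi2 r) = phi2 s ^ 2 := by
    have := congrArg phi2 hsq
    simpa [map_sub, map_mul, map_pow, map_ofNat] using this
  have idn : 4 * phi2 p * P
      = (2 * phi2 p * X 0 + phi2 q - phi2 s) * (2 * phi2 p * X 0 + phi2 q + phi2 s) := by
    rw [hP]
    linear_combination -hφsq
  have hψF : (finSuccEquiv ℂ 1) (2 * phi2 p * X 0 + phi2 q - phi2 s)
      = Polynomial.C (2 * theta1 p) * Polynomial.X + Polynomial.C (theta1 q - theta1 s) := by
    simp only [map_add, map_sub, map_mul, map_ofNat, finSuccEquiv_phi2, finSuccEquiv_X_zero,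
      Polynomial.C_sub, Polynomial.C_mul]
    ring
  have hψG : (finSuccEquiv ℂ 1) (2 * phi2 p * X 0 + phi2 q + phi2 s)
      = Polynomial.C (2 * theta1 p) * Polynomial.X + Polynomial.C (theta1 q + theta1 s) := by
    simp only [map_add, map_sub, map_mul, map_ofNat, finSuccEquiv_phi2, finSuccEquiv_X_zero,
      Polynomial.C_add, Polynomial.C_mul]
    ring
  have hprime : Prime ((finSuccEquiv ℂ 1) P) :=
    (MulEquiv.prime_iff (finSuccEquiv ℂ 1).toMulEquiv).mpr
      (UniqueFactorizationMonoid.irreducible_iff_prime.mp hirr)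
  have hdvd : (finSuccEquiv ℂ 1) P ∣
      (finSuccEquiv ℂ 1) (2 * phi2 p * X 0 + phi2 q - phi2 s) *
      (finSuccEquiv ℂ 1) (2 * phi2 p * X 0 + phi2 q + phi2 s) := by
    rw [← map_mul, ← idn, map_mul, map_mul]
    exact ⟨(finSuccEquiv ℂ 1) 4 * (finSuccEquiv ℂ 1) (phi2 p), by ring⟩
  have hFne : Polynomial.C (2 * theta1 p) * Polynomial.X + Polynomial.C (theta1 q - theta1 s) ≠ 0 := by
    intro h
    have h1 := congrArg (fun g => Polynomial.coeff g 1) h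
    simp [Polynomial.coeff_add, Polynomial.coeff_C] at h1
    exact hθp (by simpa [mul_eq_zero] using h1)
  have hGne : Polynomial.C (2 * theta1 p) * Polynomial.X + Polynomial.C (theta1 q + theta1 s) ≠ 0 := by
    intro h
    have h1 := congrArg (fun g => Polynomial.coeff g 1) h
    simp [Polynomial.coeff_add, Polynomial.coeff_C] at h1
    exact hθp (by simpa [mul_eq_zero] using h1)
  have hdegF : (Polynomial.C (2 * theta1 p) * Polynomial.X + Polynomial.C (theta1 q - theta1 s)).natDegree ≤ 1 := by
    compute_degree
  have hdegG : (Polynomial.C (2 * theta1 p) * Polynomial.X + Polynomial.C (theta1 q + theta1 s)).natDegree ≤ 1 := by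
    compute_degree
  rcases hprime.2.2 _ _ hdvd with h | h
  · rw [hψF] at h
    have := Polynomial.natDegree_le_of_dvd h hFne
    omega
  · rw [hψG] at h
    have := Polynomial.natDegree_le_of_dvd h hGne
    omega

-- pure algebra lemmas
private lemma alg_disc (A B C c e : ℂ) (hce : ¬ (c = 0 ∧ e = 0))
    (E0 : A*c^2 + B*(c*e) + C*e^2 = 0) (E2 : 2*A*c + B*e = 0) (E3 : B*c + 2*C*e = 0) :
    B^2 - 4*A*C = 0 := by
  by_cases he : e = 0
  · have hc : c ≠ 0 := fun h => hce ⟨h, he⟩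
    subst he
    have hA : A = 0 := by
      have : A * c^2 = 0 := by linear_combination E0
      rcases mul_eq_zero.mp this with h | h
      · exact h
      · exact absurd (pow_eq_zero_iff (n := 2) (by norm_num) |>.mp h) hc
    have hB : B = 0 := by
      have : B * c = 0 := by linear_combination E3
      rcases mul_eq_zero.mp this with h | h
      · exact h
      · exact absurd h hc
    rw [hA, hB]; ring
  · have key : (B^2 - 4*A*C) * e^2 = 0 := by
      linear_combination (2*A*c + B*e)*E2 - 4*A*E0
    rcases mul_eq_zero.mp key with h | h
    · exact h
    · exact absurd (pow_eq_zero_iff (n := 2) (by norm_num) |>.mp h) he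

private lemma alg_disc_deriv (A B C A0 B0 C0 c e : ℂ) (hce : ¬ (c = 0 ∧ e = 0))
    (E0 : A*c^2 + B*(c*e) + C*e^2 = 0) (E2 : 2*A*c + B*e = 0) (E3 : B*c + 2*C*e = 0)
    (F0 : A0*c^2 + B0*(c*e) + C0*e^2 = 0) :
    2*B*B0 - 4*A0*C - 4*A*C0 = 0 := by
  by_cases he : e = 0
  · have hc : c ≠ 0 := fun h => hce ⟨h, he⟩
    subst he
    have hA : A = 0 := by
      have : A * c^2 = 0 := by linear_combination E0
      rcases mul_eq_zero.mp this with h | h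
      · exact h
      · exact absurd (pow_eq_zero_iff (n := 2) (by norm_num) |>.mp h) hc
    have hB : B = 0 := by
      have : B * c = 0 := by linear_combination E3
      rcases mul_eq_zero.mp this with h | h
      · exact h
      · exact absurd h hc
    have hA0 : A0 = 0 := by
      have : A0 * c^2 = 0 := by linear_combination F0
      rcases mul_eq_zero.mp this with h | h
      · exact h
      · exact absurd (pow_eq_zero_iff (n := 2) (by norm_num) |>.mp h) hc
    rw [hA, hB, hA0]; ring
  · by_cases hc : c = 0
    · subst hc
      have hB : B = 0 := by
        have : B * e = 0 := by linear_combination E2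
        rcases mul_eq_zero.mp this with h | h
        · exact h
        · exact absurd h he
      have hC : C = 0 := by
        have : C * e = 0 := by linear_combination E3/2
        rcases mul_eq_zero.mp this with h | h
        · exact h
        · exact absurd h he
      have hC0 : C0 = 0 := by
        have : C0 * e^2 = 0 := by linear_combination F0
        rcases mul_eq_zero.mp this with h | h
        · exact h
        · exact absurd (pow_eq_zero_iff (n := 2) (by norm_num) |>.mp h) he
      rw [hB, hC, hC0]; ring
    · have key : (2*B*B0 - 4*A0*C - 4*A*C0) * (c*e) = 0 := by
        linear_combination 2*B*F0 - 2*A0*c*E3 - 2*C0*e*E2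
      rcases mul_eq_zero.mp key with h | h
      · exact h
      · rcases mul_eq_zero.mp h with h | h
        · exact absurd h hc
        · exact absurd h he

-- polynomial square helpers
private lemma double_root_dvd (p : Polynomial ℂ) (r : ℂ) (h0 : p.eval r = 0)
    (h1 : p.derivative.eval r = 0) : (Polynomial.X - Polynomial.C r)^2 ∣ p := by
  obtain ⟨g, hg⟩ := Polynomial.dvd_iff_isRoot.mpr h0
  have hd : p.derivative = g + (Polynomial.X - Polynomial.C r) * g.derivative := by
    rw [hg]; simp [Polynomial.derivative_mul]
  have hgr : g.eval r = 0 := by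
    have h2 := congrArg (Polynomial.eval r) hd
    rw [h1] at h2
    simpa using h2.symm
  obtain ⟨h, hh⟩ := Polynomial.dvd_iff_isRoot.mpr hgr
  exact ⟨h, by rw [hg, hh]; ring⟩

private lemma isCoprime_lin (r r' : ℂ) (hne : r ≠ r') :
    IsCoprime (Polynomial.X - Polynomial.C r) (Polynomial.X - Polynomial.C r') := by
  refine ⟨Polynomial.C ((r'-r)⁻¹), -Polynomial.C ((r'-r)⁻¹), ?_⟩
  have h : (r' - r) ≠ 0 := sub_ne_zero.mpr (Ne.symm hne)
  have h1 : (Polynomial.C ((r'-r)⁻¹)) * (Polynomial.C (r' - r)) = 1 := by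
    rw [← Polynomial.C_mul, inv_mul_cancel₀ h, Polynomial.C_1]
  calc Polynomial.C ((r'-r)⁻¹) * (Polynomial.X - Polynomial.C r)
        + -Polynomial.C ((r'-r)⁻¹) * (Polynomial.X - Polynomial.C r')
      = Polynomial.C ((r'-r)⁻¹) * (Polynomial.C (r' - r)) := by rw [Polynomial.C_sub]; ring
    _ = 1 := h1

private lemma ndeg_X_sub_C_sq (r : ℂ) : ((Polynomial.X - Polynomial.C r)^2).natDegree = 2 := by
  rw [Polynomial.natDegree_pow, Polynomial.natDegree_X_sub_C]

private lemma X_sub_C_sq_ne (r : ℂ) :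
    ((Polynomial.X - Polynomial.C r)^2 : Polynomial ℂ) ≠ 0 :=
  pow_ne_zero _ (Polynomial.X_sub_C_ne_zero r)

private lemma sq_of_two_dbl (δ : Polynomial ℂ) (hd : δ.natDegree ≤ 4) (r r' : ℂ) (hne : r ≠ r')
    (h1 : (Polynomial.X - Polynomial.C r)^2 ∣ δ) (h2 : (Polynomial.X - Polynomial.C r')^2 ∣ δ) :
    ∃ s, δ = s^2 := by
  by_cases h0 : δ = 0
  · exact ⟨0, by simp [h0]⟩
  obtain ⟨w, hw⟩ := ((isCoprime_lin r r' hne).pow).mul_dvd h1 h2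
  have hMne : ((Polynomial.X - Polynomial.C r)^2 * (Polynomial.X - Polynomial.C r')^2 : Polynomial ℂ) ≠ 0 :=
    mul_ne_zero (X_sub_C_sq_ne r) (X_sub_C_sq_ne r')
  have hwne : w ≠ 0 := fun h => h0 (by rw [hw, h, mul_zero])
  have hdeg : δ.natDegree = 4 + w.natDegree := by
    rw [hw, Polynomial.natDegree_mul hMne hwne,
      Polynomial.natDegree_mul (X_sub_C_sq_ne r) (X_sub_C_sq_ne r'), ndeg_X_sub_C_sq, ndeg_X_sub_C_sq]
  have hw0 : w.natDegree = 0 := by omega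
  obtain ⟨w0, hw0C⟩ := Polynomial.natDegree_eq_zero.mp hw0
  obtain ⟨s0, hs0⟩ := IsAlgClosed.exists_pow_nat_eq w0 (n := 2) (by norm_num)
  refine ⟨Polynomial.C s0 * ((Polynomial.X - Polynomial.C r) * (Polynomial.X - Polynomial.C r')), ?_⟩
  rw [hw, ← hw0C, ← hs0, mul_pow, mul_pow, ← Polynomial.C_pow]
  ring

private lemma sq_of_dbl_deg2 (δ : Polynomial ℂ) (hd : δ.natDegree ≤ 2) (r : ℂ)
    (h1 : (Polynomial.X - Polynomial.C r)^2 ∣ δ) : ∃ s, δ = s^2 := by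
  by_cases h0 : δ = 0
  · exact ⟨0, by simp [h0]⟩
  obtain ⟨w, hw⟩ := h1
  have hwne : w ≠ 0 := fun h => h0 (by rw [hw, h, mul_zero])
  have hdeg : δ.natDegree = 2 + w.natDegree := by
    rw [hw, Polynomial.natDegree_mul (X_sub_C_sq_ne r) hwne, ndeg_X_sub_C_sq]
  have hw0 : w.natDegree = 0 := by omega
  obtain ⟨w0, hw0C⟩ := Polynomial.natDegree_eq_zero.mp hw0
  obtain ⟨s0, hs0⟩ := IsAlgClosed.exists_pow_nat_eq w0 (n := 2) (by norm_num)
  refine ⟨Polynomial.C s0 * (Polynomial.X - Polynomial.C r), ?_⟩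
  rw [hw, ← hw0C, ← hs0, mul_pow, ← Polynomial.C_pow]
  ring

-- explicit quadratic/quartic helpers
private def quadP (u v w : ℂ) : Polynomial ℂ :=
  Polynomial.C u + Polynomial.C v * Polynomial.X + Polynomial.C w * Polynomial.X^2

private lemma quad_disc_expand (q0 q1 q2 p0 p1 p2 r0 r1 r2 : ℂ) :
    (quadP q0 q1 q2)^2 - 4*((quadP p0 p1 p2) * (quadP r0 r1 r2)) =
    Polynomial.C (q0^2 - 4*(p0*r0)) + Polynomial.C (2*q0*q1 - 4*(p0*r1+p1*r0)) * Polynomial.X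
    + Polynomial.C (q1^2+2*q0*q2-4*(p0*r2+p1*r1+p2*r0))*Polynomial.X^2
    + Polynomial.C (2*q1*q2 - 4*(p1*r2+p2*r1))*Polynomial.X^3
    + Polynomial.C (q2^2-4*(p2*r2))*Polynomial.X^4 := by
  simp only [quadP, map_add, map_mul, map_sub, map_pow, map_ofNat, Polynomial.C_sub,
    Polynomial.C_add, Polynomial.C_mul, Polynomial.C_pow]
  ring

private lemma quad_disc_coeffs (q0 q1 q2 p0 p1 p2 r0 r1 r2 : ℂ) :
    ((quadP q0 q1 q2)^2 - 4*((quadP p0 p1 p2) * (quadP r0 r1 r2))).coeff 4 = q2^2-4*(p2*r2)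
    ∧ ((quadP q0 q1 q2)^2 - 4*((quadP p0 p1 p2) * (quadP r0 r1 r2))).coeff 3
        = 2*q1*q2 - 4*(p1*r2+p2*r1) := by
  rw [quad_disc_expand]
  constructor <;>
  · generalize q0^2 - 4*(p0*r0) = e0
    generalize 2*q0*q1 - 4*(p0*r1+p1*r0) = e1
    generalize q1^2+2*q0*q2-4*(p0*r2+p1*r1+p2*r0) = e2
    generalize h3 : 2*q1*q2 - 4*(p1*r2+p2*r1) = e3
    generalize h4 : q2^2-4*(p2*r2) = e4
    simp [Polynomial.coeff_add, Polynomial.coeff_C_mul, Polynomial.coeff_X_pow, Polynomial.coeff_C]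

private lemma quad_disc_natDegree (q0 q1 q2 p0 p1 p2 r0 r1 r2 : ℂ) :
    ((quadP q0 q1 q2)^2 - 4*((quadP p0 p1 p2) * (quadP r0 r1 r2))).natDegree ≤ 4 := by
  rw [quad_disc_expand]
  compute_degree

private lemma quad_disc_natDegree2 (q0 q1 q2 p0 p1 p2 r0 r1 r2 : ℂ)
    (h4 : q2^2-4*(p2*r2) = 0) (h3 : 2*q1*q2 - 4*(p1*r2+p2*r1) = 0) :
    ((quadP q0 q1 q2)^2 - 4*((quadP p0 p1 p2) * (quadP r0 r1 r2))).natDegree ≤ 2 := by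
  rw [quad_disc_expand, h4, h3]
  simp only [Polynomial.C_0, zero_mul, add_zero]
  compute_degree

private lemma quad_eval (u v w z : ℂ) : (quadP u v w).eval z = u + v*z + w*z^2 := by
  simp [quadP]

private lemma quad_disc_eval (q0 q1 q2 p0 p1 p2 r0 r1 r2 z : ℂ) :
    ((quadP q0 q1 q2)^2 - 4*((quadP p0 p1 p2) * (quadP r0 r1 r2))).eval z
    = (q0+q1*z+q2*z^2)^2 - 4*((p0+p1*z+p2*z^2)*(r0+r1*z+r2*z^2)) := by
  simp [quad_eval]

private lemma quad_disc_deriv_eval (q0 q1 q2 p0 p1 p2 r0 r1 r2 z : ℂ) :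
    (Polynomial.derivative ((quadP q0 q1 q2)^2 - 4*((quadP p0 p1 p2) * (quadP r0 r1 r2)))).eval z
    = 2*(q0+q1*z+q2*z^2)*(q1+2*q2*z)
      - 4*((p1+2*p2*z)*(r0+r1*z+r2*z^2) + (p0+p1*z+p2*z^2)*(r1+2*r2*z)) := by
  simp [quadP, Polynomial.derivative_pow, Polynomial.derivative_mul]
  ring

-- explicit evaluation formulas for the bihomogenized kernel and its partials
private lemma evalKb (a b c e : ℂ) :
    eval ![a, b, c, e] (kernelKbar d t) =
      (-(((t:ℝ):ℂ) * (((d (-1) 1 :ℝ):ℂ) * b^2 + ((d 0 1 :ℝ):ℂ) * a*b + ((d 1 1 :ℝ):ℂ) * a^2))) * c^2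
      + (a*b - ((t:ℝ):ℂ) * (((d (-1) 0 :ℝ):ℂ) * b^2 + ((d 0 0 :ℝ):ℂ) * a*b + ((d 1 0 :ℝ):ℂ) * a^2)) * (c*e)
      + (-(((t:ℝ):ℂ) * (((d (-1) (-1) :ℝ):ℂ) * b^2 + ((d 0 (-1) :ℝ):ℂ) * a*b + ((d 1 (-1) :ℝ):ℂ) * a^2))) * e^2 := by
  simp [kernelKbar, Finset.sum_range_succ]
  ring

private lemma evalP2 (a b c e : ℂ) :
    eval ![a, b, c, e] (pderiv 2 (kernelKbar d t)) =
      2 * (-(((t:ℝ):ℂ) * (((d (-1) 1 :ℝ):ℂ) * b^2 + ((d 0 1 :ℝ):ℂ) * a*b + ((d 1 1 :ℝ):ℂ) * a^2))) * c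
      + (a*b - ((t:ℝ):ℂ) * (((d (-1) 0 :ℝ):ℂ) * b^2 + ((d 0 0 :ℝ):ℂ) * a*b + ((d 1 0 :ℝ):ℂ) * a^2)) * e := by
  simp [kernelKbar, Finset.sum_range_succ, pderiv_mul, pderiv_pow, pderiv_X, pderiv_C]
  ring

private lemma evalP3 (a b c e : ℂ) :
    eval ![a, b, c, e] (pderiv 3 (kernelKbar d t)) =
      (a*b - ((t:ℝ):ℂ) * (((d (-1) 0 :ℝ):ℂ) * b^2 + ((d 0 0 :ℝ):ℂ) * a*b + ((d 1 0 :ℝ):ℂ) * a^2)) * c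
      + 2 * (-(((t:ℝ):ℂ) * (((d (-1) (-1) :ℝ):ℂ) * b^2 + ((d 0 (-1) :ℝ):ℂ) * a*b + ((d 1 (-1) :ℝ):ℂ) * a^2))) * e := by
  simp [kernelKbar, Finset.sum_range_succ, pderiv_mul, pderiv_pow, pderiv_X, pderiv_C]
  ring

private lemma evalP0 (a b c e : ℂ) :
    eval ![a, b, c, e] (pderiv 0 (kernelKbar d t)) =
      (-(((t:ℝ):ℂ) * (((d 0 1 :ℝ):ℂ) * b + 2*((d 1 1 :ℝ):ℂ) * a))) * c^2
      + (b - ((t:ℝ):ℂ) * (((d 0 0 :ℝ):ℂ) * b + 2*((d 1 0 :ℝ):ℂ) * a)) * (c*e)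
      + (-(((t:ℝ):ℂ) * (((d 0 (-1) :ℝ):ℂ) * b + 2*((d 1 (-1) :ℝ):ℂ) * a))) * e^2 := by
  simp [kernelKbar, Finset.sum_range_succ, pderiv_mul, pderiv_pow, pderiv_X, pderiv_C]
  ring

private lemma evalP1 (a b c e : ℂ) :
    eval ![a, b, c, e] (pderiv 1 (kernelKbar d t)) =
      (-(((t:ℝ):ℂ) * (2*((d (-1) 1 :ℝ):ℂ) * b + ((d 0 1 :ℝ):ℂ) * a))) * c^2
      + (a - ((t:ℝ):ℂ) * (2*((d (-1) 0 :ℝ):ℂ) * b + ((d 0 0 :ℝ):ℂ) * a)) * (c*e)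
      + (-(((t:ℝ):ℂ) * (2*((d (-1) (-1) :ℝ):ℂ) * b + ((d 0 (-1) :ℝ):ℂ) * a))) * e^2 := by
  simp [kernelKbar, Finset.sum_range_succ, pderiv_mul, pderiv_pow, pderiv_X, pderiv_C]
  ring

-- the three coefficient polynomials of K as a quadratic in y, and the discriminant
private def pP : Polynomial ℂ :=
  quadP (-(((t:ℝ):ℂ) * ((d (-1) 1 :ℝ):ℂ))) (-(((t:ℝ):ℂ) * ((d 0 1 :ℝ):ℂ)))
    (-(((t:ℝ):ℂ) * ((d 1 1 :ℝ):ℂ)))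

private def pQ : Polynomial ℂ :=
  quadP (-(((t:ℝ):ℂ) * ((d (-1) 0 :ℝ):ℂ))) (1 - ((t:ℝ):ℂ) * ((d 0 0 :ℝ):ℂ))
    (-(((t:ℝ):ℂ) * ((d 1 0 :ℝ):ℂ)))

private def pR : Polynomial ℂ :=
  quadP (-(((t:ℝ):ℂ) * ((d (-1) (-1) :ℝ):ℂ))) (-(((t:ℝ):ℂ) * ((d 0 (-1) :ℝ):ℂ)))
    (-(((t:ℝ):ℂ) * ((d 1 (-1) :ℝ):ℂ)))

private def deltaX : Polynomial ℂ := (pQ d t)^2 - 4*(pP d t * pR d t)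

private lemma sing_delta (a b c e : ℂ) (hab : (a, b) ≠ (0, 0)) (hce : (c, e) ≠ (0, 0))
    (hs : SingularAt d t a b c e) :
    (b ≠ 0 → (deltaX d t).eval (a/b) = 0 ∧ ((deltaX d t).derivative).eval (a/b) = 0) ∧
    (b = 0 → (deltaX d t).coeff 4 = 0 ∧ (deltaX d t).coeff 3 = 0) := by
  obtain ⟨h0, hpd⟩ := hs
  rw [OnKernelCurve, evalKb] at h0
  have h2 := hpd 2; rw [evalP2] at h2
  have h3 := hpd 3; rw [evalP3] at h3
  have hp0 := hpd 0; rw [evalP0] at hp0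
  have hp1 := hpd 1; rw [evalP1] at hp1
  have hce' : ¬ (c = 0 ∧ e = 0) := by
    intro ⟨hc, he⟩; exact hce (by rw [hc, he])
  have hDisc := alg_disc _ _ _ c e hce' h0 h2 h3
  have hD0 := alg_disc_deriv _ _ _ _ _ _ c e hce' h0 h2 h3 hp0
  have hD1 := alg_disc_deriv _ _ _ _ _ _ c e hce' h0 h2 h3 hp1
  constructor
  · intro hb
    constructor
    · have key : (deltaX d t).eval (a/b) * b^4 = 0 := by
        have ha : a = (a/b) * b := (div_mul_cancel₀ a hb).symm
        rw [deltaX, pP, pQ, pR, quad_disc_eval]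
        rw [ha] at hDisc
        linear_combination hDisc
      rcases mul_eq_zero.mp key with h | h
      · exact h
      · exact absurd (pow_eq_zero_iff (n := 4) (by norm_num) |>.mp h) hb
    · have key : ((deltaX d t).derivative).eval (a/b) * b^3 = 0 := by
        have ha : a = (a/b) * b := (div_mul_cancel₀ a hb).symm
        rw [deltaX, pP, pQ, pR, quad_disc_deriv_eval]
        rw [ha] at hD0
        linear_combination hD0
      rcases mul_eq_zero.mp key with h | h
      · exact h
      · exact absurd (pow_eq_zero_iff (n := 3) (by norm_num) |>.mp h) hb
  · intro hb
    subst hb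
    have ha : a ≠ 0 := by
      intro h; exact hab (by rw [h])
    have hc4 : (deltaX d t).coeff 4
        = (-(((t:ℝ):ℂ) * ((d 1 0 :ℝ):ℂ)))^2
          - 4*((-(((t:ℝ):ℂ) * ((d 1 1 :ℝ):ℂ))) * (-(((t:ℝ):ℂ) * ((d 1 (-1) :ℝ):ℂ)))) :=
      (quad_disc_coeffs _ _ _ _ _ _ _ _ _).1
    have hc3 : (deltaX d t).coeff 3
        = 2*(1 - ((t:ℝ):ℂ) * ((d 0 0 :ℝ):ℂ))*(-(((t:ℝ):ℂ) * ((d 1 0 :ℝ):ℂ)))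
          - 4*((-(((t:ℝ):ℂ) * ((d 0 1 :ℝ):ℂ)))*(-(((t:ℝ):ℂ) * ((d 1 (-1) :ℝ):ℂ)))
            + (-(((t:ℝ):ℂ) * ((d 1 1 :ℝ):ℂ)))*(-(((t:ℝ):ℂ) * ((d 0 (-1) :ℝ):ℂ)))) :=
      (quad_disc_coeffs _ _ _ _ _ _ _ _ _).2
    constructor
    · rw [hc4]
      have key : ((-(((t:ℝ):ℂ) * ((d 1 0 :ℝ):ℂ)))^2
          - 4*((-(((t:ℝ):ℂ) * ((d 1 1 :ℝ):ℂ))) * (-(((t:ℝ):ℂ) * ((d 1 (-1) :ℝ):ℂ))))) * a^4 = 0 := by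
        linear_combination hDisc
      rcases mul_eq_zero.mp key with h | h
      · exact h
      · exact absurd (pow_eq_zero_iff (n := 4) (by norm_num) |>.mp h) ha
    · rw [hc3]
      have key : (2*(1 - ((t:ℝ):ℂ) * ((d 0 0 :ℝ):ℂ))*(-(((t:ℝ):ℂ) * ((d 1 0 :ℝ):ℂ)))
          - 4*((-(((t:ℝ):ℂ) * ((d 0 1 :ℝ):ℂ)))*(-(((t:ℝ):ℂ) * ((d 1 (-1) :ℝ):ℂ)))
            + (-(((t:ℝ):ℂ) * ((d 1 1 :ℝ):ℂ)))*(-(((t:ℝ):ℂ) * ((d 0 (-1) :ℝ):ℂ))))) * a^3 = 0 := by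
        linear_combination hD1
      rcases mul_eq_zero.mp key with h | h
      · exact h
      · exact absurd (pow_eq_zero_iff (n := 3) (by norm_num) |>.mp h) ha

private lemma kernelK_decomp :
    rename (Equiv.swap (0 : Fin 2) 1) (kernelK d t)
      = phi2 (pP d t) * X 0 ^ 2 + phi2 (pQ d t) * X 0 + phi2 (pR d t) := by
  rw [kernelK, pP, pQ, pR]
  simp [Finset.sum_range_succ, quadP, phi2, map_add, map_mul, map_sub, map_pow,
    Equiv.swap_apply_left, Equiv.swap_apply_right]
  ring

private lemma xpart (hnd : ¬ Degenerate d t) (a b c e a' b' c' e' : ℂ)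
    (hab : (a, b) ≠ (0, 0)) (hce : (c, e) ≠ (0, 0))
    (hab' : (a', b') ≠ (0, 0)) (hce' : (c', e') ≠ (0, 0))
    (hs : SingularAt d t a b c e) (hs' : SingularAt d t a' b' c' e') :
    a * b' = a' * b := by
  rw [Degenerate] at hnd
  push_neg at hnd
  obtain ⟨hirr, hd0, hd1⟩ := hnd
  have hirrP : Irreducible (rename (Equiv.swap (0 : Fin 2) 1) (kernelK d t)) := by
    have := (MulEquiv.irreducible_iff
      (renameEquiv ℂ (Equiv.swap (0 : Fin 2) 1)).toMulEquiv (x := kernelK d t)).mpr hirr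
    simpa using this
  have hdegP : 2 ≤ degreeOf 0 (rename (Equiv.swap (0 : Fin 2) 1) (kernelK d t)) := by
    have h := degreeOf_rename_of_injective
      (Equiv.injective (Equiv.swap (0 : Fin 2) 1)) (p := kernelK d t) 1
    rw [Equiv.swap_apply_right] at h
    omega
  have F := sing_delta d t a b c e hab hce hs
  have F' := sing_delta d t a' b' c' e' hab' hce' hs'
  by_contra hne
  have hsq : ∃ s, deltaX d t = s ^ 2 := by
    by_cases hb : b = 0
    · by_cases hb' : b' = 0
      · exact absurd (by rw [hb, hb']; ring) hne
      · obtain ⟨h4, h3⟩ := F.2 hb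
        obtain ⟨he0, he1⟩ := F'.1 hb'
        have hdeg2 : (deltaX d t).natDegree ≤ 2 := by
          rw [deltaX, pP, pQ, pR] at h4 h3 ⊢
          apply quad_disc_natDegree2
          · rw [← (quad_disc_coeffs _ _ _ _ _ _ _ _ _).1]; exact h4
          · rw [← (quad_disc_coeffs _ _ _ _ _ _ _ _ _).2]; exact h3
        exact sq_of_dbl_deg2 _ hdeg2 _ (double_root_dvd _ _ he0 he1)
    · by_cases hb' : b' = 0
      · obtain ⟨h4, h3⟩ := F'.2 hb'
        obtain ⟨he0, he1⟩ := F.1 hb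
        have hdeg2 : (deltaX d t).natDegree ≤ 2 := by
          rw [deltaX, pP, pQ, pR] at h4 h3 ⊢
          apply quad_disc_natDegree2
          · rw [← (quad_disc_coeffs _ _ _ _ _ _ _ _ _).1]; exact h4
          · rw [← (quad_disc_coeffs _ _ _ _ _ _ _ _ _).2]; exact h3
        exact sq_of_dbl_deg2 _ hdeg2 _ (double_root_dvd _ _ he0 he1)
      · obtain ⟨he0, he1⟩ := F.1 hb
        obtain ⟨he0', he1'⟩ := F'.1 hb'
        have hrr : a/b ≠ a'/b' := by
          intro h
          exact hne ((div_eq_div_iff hb hb').mp h)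
        have hdeg4 : (deltaX d t).natDegree ≤ 4 := by
          rw [deltaX, pP, pQ, pR]; exact quad_disc_natDegree _ _ _ _ _ _ _ _ _
        exact sq_of_two_dbl _ hdeg4 _ _ hrr (double_root_dvd _ _ he0 he1)
          (double_root_dvd _ _ he0' he1')
  obtain ⟨s, hsqs⟩ := hsq
  exact core (pP d t) (pQ d t) (pR d t) s _ (kernelK_decomp d t) hirrP hdegP
    (by rw [← deltaX]; exact hsqs)

private lemma singular_transpose (a b c e : ℂ) (hs : SingularAt d t a b c e) :
    SingularAt (fun i j => d j i) t c e a b := by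
  obtain ⟨h0, hpd⟩ := hs
  rw [OnKernelCurve, evalKb] at h0
  have h2 := hpd 2; rw [evalP2] at h2
  have h3 := hpd 3; rw [evalP3] at h3
  have hq0 := hpd 0; rw [evalP0] at hq0
  have hq1 := hpd 1; rw [evalP1] at hq1
  constructor
  · rw [OnKernelCurve, evalKb]
    linear_combination h0
  · intro k
    fin_cases k
    · show eval ![c, e, a, b] (pderiv 0 (kernelKbar (fun i j => d j i) t)) = 0
      rw [evalP0]; linear_combination h2
    · show eval ![c, e, a, b] (pderiv 1 (kernelKbar (fun i j => d j i) t)) = 0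
      rw [evalP1]; linear_combination h3
    · show eval ![c, e, a, b] (pderiv 2 (kernelKbar (fun i j => d j i) t)) = 0
      rw [evalP2]; linear_combination hq0
    · show eval ![c, e, a, b] (pderiv 3 (kernelKbar (fun i j => d j i) t)) = 0
      rw [evalP3]; linear_combination hq1

private lemma kernelK_transpose :
    kernelK (fun i j => d j i) t = rename (Equiv.swap (0 : Fin 2) 1) (kernelK d t) := by
  rw [kernelK, kernelK]
  simp [Finset.sum_range_succ, map_add, map_mul, map_sub, map_pow,
    Equiv.swap_apply_left, Equiv.swap_apply_right]
  ring

private lemma degenerate_transpose (hnd : ¬ Degenerate d t) :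
    ¬ Degenerate (fun i j => d j i) t := by
  rw [Degenerate] at hnd ⊢
  push_neg at hnd ⊢
  obtain ⟨hirr, hd0, hd1⟩ := hnd
  rw [kernelK_transpose]
  refine ⟨?_, ?_, ?_⟩
  · have := (MulEquiv.irreducible_iff
      (renameEquiv ℂ (Equiv.swap (0 : Fin 2) 1)).toMulEquiv (x := kernelK d t)).mpr hirr
    simpa using this
  · have h := degreeOf_rename_of_injective
      (Equiv.injective (Equiv.swap (0 : Fin 2) 1)) (p := kernelK d t) 1
    rw [Equiv.swap_apply_right] at h
    omega
  · have h := degreeOf_rename_of_injective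
      (Equiv.injective (Equiv.swap (0 : Fin 2) 1)) (p := kernelK d t) 0
    rw [Equiv.swap_apply_left] at h
    omega

private lemma proj_scalar (a b a' b' : ℂ) (hab : (a, b) ≠ (0, 0)) (hab' : (a', b') ≠ (0, 0))
    (h : a * b' = a' * b) : ∃ lam : ℂ, lam ≠ 0 ∧ a' = lam * a ∧ b' = lam * b := by
  by_cases ha : a = 0
  · subst ha
    have hb : b ≠ 0 := by
      intro hb; exact hab (by rw [hb])
    have ha' : a' = 0 := by
      rcases mul_eq_zero.mp (show a' * b = 0 by rw [← h]; ring) with h' | h'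
      · exact h'
      · exact absurd h' hb
    have hb' : b' ≠ 0 := by
      intro hb'; exact hab' (by rw [ha', hb'])
    exact ⟨b'/b, div_ne_zero hb' hb, by rw [ha', mul_zero], by field_simp⟩
  · have ha' : a' ≠ 0 := by
      intro ha'
      have hb' : b' = 0 := by
        rcases mul_eq_zero.mp (show a * b' = 0 by rw [h, ha']; ring) with h' | h'
        · exact absurd h' ha
        · exact h'
      exact hab' (by rw [ha', hb'])
    refine ⟨a'/a, div_ne_zero ha' ha, by field_simp, ?_⟩
    rw [div_mul_eq_mul_div, eq_div_iff ha]
    linear_combination h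

/-- for a nondegenerate model of walk, the kernel curve `Ē_t` has at most
one singular point: any two singular points (given by nonzero homogeneous
representatives) coincide in `ℙ¹(ℂ)×ℙ¹(ℂ)`. -/
theorem at_most_one_singular_point (h : WalkHyp d t) (hnd : ¬ Degenerate d t)
    (a b c e a' b' c' e' : ℂ)
    (hab : (a, b) ≠ (0, 0)) (hce : (c, e) ≠ (0, 0))
    (hab' : (a', b') ≠ (0, 0)) (hce' : (c', e') ≠ (0, 0))
    (hs : SingularAt d t a b c e) (hs' : SingularAt d t a' b' c' e') :
    ∃ lam mu : ℂ, lam ≠ 0 ∧ mu ≠ 0 ∧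
      a' = lam * a ∧ b' = lam * b ∧ c' = mu * c ∧ e' = mu * e := by
  have hx : a * b' = a' * b := xpart d t hnd a b c e a' b' c' e' hab hce hab' hce' hs hs'
  have hy : c * e' = c' * e :=
    xpart (fun i j => d j i) t (degenerate_transpose d t hnd) c e a b c' e' a' b'
      hce hab hce' hab' (singular_transpose d t a b c e hs)
      (singular_transpose d t a' b' c' e' hs')
  obtain ⟨lam, hlam, ha', hb'⟩ := proj_scalar a b a' b' hab hab' hx
  obtain ⟨mu, hmu, hc', he'⟩ := proj_scalar c e c' e' hce hce' hy
  exact ⟨lam, mu, hlam, hmu, ha', hb', hc', he'⟩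

end
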